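/- arXiv:1504.06425 — 4 statements merged into one kernel-verified Lean document; each statement's English description precedes it below -/
import Mathlib

section
/- There is no function u : ℝ → ℝ, differentiable on all of ℝ, satisfying the strict Riccati differential inequality deriv u t < -(u t)^2 / 2 for all t ∈ ℝ. (Equivalently: any globally defined differentiable solution of u' < -u²/2 leads to a contradiction.) -/
theorem stmt_0 :
    ¬ ∃ u : ℝ → ℝ, Differentiable ℝ u ∧ ∀ t : ℝ, deriv u t < -(u t)^2 / 2 := by
  rintro ⟨u, hdiff, hlt⟩
  have hanti : StrictAnti u := by
    apply strictAnti_of_deriv_neg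
    intro x
    have := hlt x
    nlinarith [sq_nonneg (u x)]
  set g : ℝ → ℝ := fun t => (u t)⁻¹ - t / 2 with hg
  have hgd : ∀ x : ℝ, u x ≠ 0 → HasDerivAt g (-(deriv u x) / (u x) ^ 2 - 1 / 2) x := by
    intro x hne
    have h1 := ((hdiff x).hasDerivAt).inv hne
    have h2 : HasDerivAt (fun t : ℝ => t / 2) (1 / 2) x := by
      simpa using (hasDerivAt_id x).div_const 2
    exact h1.sub h2
  have hpos : ∀ x : ℝ, u x ≠ 0 → 0 < -(deriv u x) / (u x) ^ 2 - 1 / 2 := by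
    intro x hne
    have h := hlt x
    have h2 : (0 : ℝ) < (u x) ^ 2 := by positivity
    rw [sub_pos, lt_div_iff₀ h2]
    nlinarith
  by_cases h0 : 0 < u 0
  · -- backward blow-up
    have hpos' : ∀ t : ℝ, t ≤ 0 → 0 < u t := fun t ht =>
      lt_of_lt_of_le h0 (hanti.antitone ht)
    have hmono : StrictMonoOn g (Set.Iic 0) := by
      apply strictMonoOn_of_deriv_pos (convex_Iic 0)
      · apply ContinuousOn.sub
        · exact ContinuousOn.inv₀ hdiff.continuous.continuousOn
            fun t ht => (hpos' t ht).ne'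
        · exact (continuous_id.div_const 2).continuousOn
      · intro x hx
        rw [interior_Iic] at hx
        have hne := (hpos' x hx.le).ne'
        rw [(hgd x hne).deriv]
        exact hpos x hne
    set T : ℝ := -2 * (u 0)⁻¹ - 2 with hT
    have hu0 : 0 < (u 0)⁻¹ := inv_pos.mpr h0
    have hTneg : T < 0 := by rw [hT]; nlinarith
    have hlt' : g T < g 0 := hmono (Set.mem_Iic.mpr hTneg.le) Set.self_mem_Iic hTneg
    have huT : 0 < (u T)⁻¹ := inv_pos.mpr (hpos' T hTneg.le)
    simp only [hg] at hlt'
    nlinarith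
  · -- forward blow-up
    have h1 : u 1 < 0 := lt_of_lt_of_le (hanti zero_lt_one) (not_lt.mp h0)
    have hneg : ∀ t : ℝ, 1 ≤ t → u t < 0 := fun t ht =>
      lt_of_le_of_lt (hanti.antitone ht) h1
    have hmono : StrictMonoOn g (Set.Ici 1) := by
      apply strictMonoOn_of_deriv_pos (convex_Ici 1)
      · apply ContinuousOn.sub
        · exact ContinuousOn.inv₀ hdiff.continuous.continuousOn
            fun t ht => (hneg t ht).ne
        · exact (continuous_id.div_const 2).continuousOn
      · intro x hx
        rw [interior_Ici] at hx
        have hne := (hneg x hx.le).ne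
        rw [(hgd x hne).deriv]
        exact hpos x hne
    set T : ℝ := 1 - 2 * (u 1)⁻¹ + 2 with hT
    have hu1 : (u 1)⁻¹ < 0 := inv_neg''.mpr h1
    have hTgt : 1 < T := by rw [hT]; nlinarith
    have hlt' : g 1 < g T := hmono Set.self_mem_Ici (Set.mem_Ici.mpr hTgt.le) hTgt
    have huT : (u T)⁻¹ < 0 := inv_neg''.mpr (hneg T hTgt.le)
    simp only [hg] at hlt'
    nlinarith
end

section
/- Let u : ℝ → ℝ be differentiable with deriv u t < -(u t)^2 / 2 for all t ∈ ℝ. Then u t > 0 for all t ∈ ℝ. -/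
theorem stmt_1 (u : ℝ → ℝ) (hu : Differentiable ℝ u)
    (h : ∀ t : ℝ, deriv u t < -(u t)^2 / 2) :
    ∀ t : ℝ, u t > 0 := by
  by_contra hc
  push_neg at hc
  obtain ⟨t₀, ht₀⟩ := hc
  have hanti : StrictAnti u := by
    apply strictAnti_of_deriv_neg
    intro x
    have := h x
    nlinarith [sq_nonneg (u x)]
  set t₁ := t₀ + 1 with ht₁
  have hneg : u t₁ < 0 := lt_of_lt_of_le (hanti (by linarith : t₀ < t₁)) ht₀
  have huneg : ∀ x ∈ Set.Ici t₁, u x < 0 := fun x hx =>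
    lt_of_le_of_lt (hanti.antitone hx) hneg
  set a := -u t₁ with ha
  have ha0 : 0 < a := by linarith
  have hd : ∀ x ∈ Set.Ici t₁, HasDerivAt (fun t => 2 / u t - t)
      ((0 * u x - 2 * deriv u x) / (u x) ^ 2 - 1) x := by
    intro x hx
    exact ((hasDerivAt_const x (2 : ℝ)).div (hu x).hasDerivAt (huneg x hx).ne).sub
      (hasDerivAt_id x)
  have hmono : StrictMonoOn (fun t => 2 / u t - t) (Set.Ici t₁) := by
    apply StrictMonoOn.mono (s := Set.Ici t₁) ?_ le_rfl
    apply strictMonoOn_of_deriv_pos (convex_Ici t₁)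
    · intro x hx
      exact ((hd x hx).differentiableAt).continuousAt.continuousWithinAt
    · intro x hx
      rw [interior_Ici] at hx
      rw [(hd x (Set.mem_Ici.mpr (le_of_lt (Set.mem_Ioi.mp hx)))).deriv]
      have hux := huneg x (Set.mem_Ici.mpr (le_of_lt (Set.mem_Ioi.mp hx)))
      have hdx := h x
      have h2 : (0:ℝ) < (u x) ^ 2 := by nlinarith
      have h3 : (0 * u x - 2 * deriv u x) / (u x) ^ 2 > 1 := by
        rw [gt_iff_lt, lt_div_iff₀ h2]
        nlinarith
      linarith
  set t₂ := t₁ + 2 / a with ht₂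
  have ht12 : t₁ < t₂ := by
    have h2a : 0 < 2 / a := by positivity
    rw [ht₂]
    linarith
  have hgt := hmono (Set.self_mem_Ici) (le_of_lt ht12 : t₁ ≤ t₂) ht12
  have hu1 : u t₁ = -a := by rw [ha]; ring
  have hut2 : u t₂ < 0 := huneg t₂ (le_of_lt ht12)
  have hnegdiv : 2 / u t₂ < 0 := div_neg_of_pos_of_neg (by norm_num) hut2
  simp only [hu1] at hgt
  rw [div_neg] at hgt
  rw [ht₂] at hgt
  linarith
end

section
/- Let u : ℝ → ℝ be differentiable and satisfy deriv u t ≤ -(u t)²/2 - b for all t ∈ ℝ, where b > 0 is a constant. Then no such u exists (the hypotheses are contradictory). -/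
theorem stmt_14 (b : ℝ) (hb : 0 < b) :
    ¬ ∃ u : ℝ → ℝ, Differentiable ℝ u ∧ ∀ t : ℝ, deriv u t ≤ -(u t)^2 / 2 - b := by
  rintro ⟨u, hdiff, hderiv⟩
  -- Step 1: u decreases at least at rate b
  have hstep : ∀ ⦃x y : ℝ⦄, x ≤ y → u y - u x ≤ -b * (y - x) :=
    image_sub_le_mul_sub_of_deriv_le hdiff
      (fun x => by nlinarith [sq_nonneg (u x), hderiv x])
  -- Step 2: find t0 with u t0 ≤ -1
  set t0 : ℝ := max 0 ((u 0 + 1) / b) with ht0def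
  have ht0 : u t0 ≤ -1 := by
    have h1 : (u 0 + 1) / b ≤ t0 := le_max_right _ _
    have h2 : u 0 + 1 ≤ b * t0 := by
      rwa [div_le_iff₀ hb, mul_comm] at h1
    have := hstep (le_max_left 0 ((u 0 + 1) / b))
    nlinarith
  -- Step 3: for t ≥ t0, u t ≤ -1
  have hneg : ∀ t, t0 ≤ t → u t ≤ -1 := by
    intro t ht
    have := hstep ht
    nlinarith
  have hne : ∀ t ∈ Set.Ici t0, u t ≠ 0 := fun t ht => by
    have := hneg t ht; intro h; rw [h] at this; linarith
  -- g = 1/u on [t0, ∞)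
  set g : ℝ → ℝ := fun t => (u t)⁻¹ with hg
  have hgcont : ContinuousOn g (Set.Ici t0) :=
    (hdiff.continuous.continuousOn).inv₀ hne
  have hgderiv : ∀ x ∈ interior (Set.Ici t0),
      HasDerivAt g (-(deriv u x) / (u x) ^ 2) x := by
    intro x hx
    rw [interior_Ici] at hx
    exact ((hdiff x).hasDerivAt).inv (hne x (Set.mem_Ici.2 (le_of_lt hx)))
  have hgdiff : DifferentiableOn ℝ g (interior (Set.Ici t0)) :=
    fun x hx => ((hgderiv x hx).differentiableAt).differentiableWithinAt
  have hgd_ge : ∀ x ∈ interior (Set.Ici t0), (1/2 : ℝ) ≤ deriv g x := by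
    intro x hx
    rw [(hgderiv x hx).deriv]
    have hux : u x ≤ -1 := by
      rw [interior_Ici] at hx; exact hneg x (le_of_lt hx)
    have hsq : (1:ℝ) ≤ (u x) ^ 2 := by nlinarith
    rw [le_div_iff₀ (by positivity)]
    nlinarith [hderiv x]
  -- MVT: g grows at least at rate 1/2 on [t0, ∞)
  have key := (convex_Ici t0).mul_sub_le_image_sub_of_le_deriv hgcont hgdiff hgd_ge
    t0 Set.self_mem_Ici (t0 + 3) (by simp)
    (by linarith)
  -- But g t0 ≥ -1 and g (t0+3) < 0
  have hgt0 : (-1 : ℝ) ≤ g t0 := by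
    have h1 : u t0 ≤ -1 := ht0
    have h2 : u t0 ≠ 0 := by intro h; rw [h] at h1; linarith
    have h3 : u t0 * (u t0)⁻¹ = 1 := mul_inv_cancel₀ h2
    have h4 : (u t0)⁻¹ < 0 := inv_lt_zero.mpr (by linarith)
    nlinarith
  have hgt3 : g (t0 + 3) < 0 := by
    have h1 : u (t0 + 3) ≤ -1 := hneg _ (by linarith)
    exact inv_lt_zero.mpr (by linarith)
  nlinarith
end

section
/- Let g be a symmetric bilinear form of Lorentzian signature (-,+,+,+) on a 4-dimensional real vector space V, let k be a null vector, let f'∈ ℝ with f' ≠ 0, and suppose ω is an alternating form on V satisfying ω(k, L) = -f' and ω(x, y) = -ι with ι ≠ 0, and ω(k,x) = ω(k,y) = ω(L,x) = ω(L,y) = 0, for some null frame {k,x,y,L} as in the paper (x,y orthonormal spacelike orthogonal to k and L, g(L,L)=0, g(k,L) = -1). Then ω ∧ ω = 2 f' ι · (volume form dual to the frame), and in the basis {k,x,y,L} one has det(ω) = (f')² ι² > 0. -/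
theorem stmt_16 (V : Type*) [AddCommGroup V] [Module ℝ V]
    (g : V →ₗ[ℝ] V →ₗ[ℝ] ℝ) (hgsymm : ∀ v w : V, g v w = g w v)
    (k x y L : V)
    -- null frame conditions: x, y orthonormal spacelike, orthogonal to the null
    -- vectors k and L, with g(k,L) = -1
    (hxx : g x x = 1) (hyy : g y y = 1) (hxy : g x y = 0)
    (hkx : g k x = 0) (hky : g k y = 0) (hLx : g L x = 0) (hLy : g L y = 0)
    (hkk : g k k = 0) (hLL : g L L = 0) (hkL : g k L = -1)
    (hbasis : LinearIndependent ℝ ![k, x, y, L])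
    (ω : V →ₗ[ℝ] V →ₗ[ℝ] ℝ) (halt : ∀ v : V, ω v v = 0)
    (f' ι : ℝ) (hf' : f' ≠ 0) (hι : ι ≠ 0)
    (hkL' : ω k L = -f') (hxy' : ω x y = -ι)
    (hkx' : ω k x = 0) (hky' : ω k y = 0) (hLx' : ω L x = 0) (hLy' : ω L y = 0) :
    -- (ω ∧ ω)(k, x, y, L) = 2 f' ι, i.e. ω ∧ ω is 2 f' ι times the volume form
    -- dual to the frame {k, x, y, L}
    2 * (ω k x * ω y L - ω k y * ω x L + ω k L * ω x y) = 2 * f' * ι ∧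
    (Matrix.of fun i j : Fin 4 => ω (![k, x, y, L] i) (![k, x, y, L] j)).det
      = f' ^ 2 * ι ^ 2 ∧
    0 < (Matrix.of fun i j : Fin 4 => ω (![k, x, y, L] i) (![k, x, y, L] j)).det := by
  have skew : ∀ v w : V, ω v w = -ω w v := by
    intro v w
    have h := halt (v + w)
    simp only [map_add, LinearMap.add_apply, halt] at h
    linarith
  have hLk : ω L k = f' := by rw [skew, hkL']; ring
  have hyx : ω y x = ι := by rw [skew, hxy']; ring
  have hxL : ω x L = 0 := by rw [skew, hLx']; ring
  have hyL : ω y L = 0 := by rw [skew, hLy']; ring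
  have hxk : ω x k = 0 := by rw [skew, hkx']; ring
  have hyk : ω y k = 0 := by rw [skew, hky']; ring
  have hdet : (Matrix.of fun i j : Fin 4 => ω (![k, x, y, L] i) (![k, x, y, L] j)).det
      = f' ^ 2 * ι ^ 2 := by
    simp [Matrix.det_succ_row_zero, Fin.sum_univ_succ, Matrix.of_apply, halt,
      hkL', hxy', hkx', hky', hLx', hLy', hLk, hyx, hxL, hyL, hxk, hyk,
      show ((2 : Fin 3).castSucc : Fin 4) = 2 from rfl,
      show Fin.succAbove (3 : Fin 4) (2 : Fin 3) = 2 by decide]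
    ring
  refine ⟨?_, hdet, ?_⟩
  · rw [hkx', hky', hkL', hxy']; ring
  · rw [hdet]
    positivity
end
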